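/- Let Z be a real random variable (Z = ln(p(x)/p̂(x)) for x ∼ q) with mean μ = E[Z], and suppose Z is (σ, 1/2)-subexponential with σ ≤ O(1) and μ ≤ O(1). Then (E_{x∼q}|p(x)/p̂(x) − 1|²)^{1/2} ≤ C·(μ + σ) for an absolute constant C. -/
import Mathlib


open MeasureTheory Real

/-- If `Z = ln(p(x)/p̂(x))` for `x ∼ q` has mean `μ ≤ O(1)` and is `(σ, 1/2)`-subexponential
with `σ ≤ O(1)`, then `(E_{x∼q}|p(x)/p̂(x) − 1|²)^{1/2} ≤ C·(μ + σ)` for an absolute constant. -/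
theorem stmt_1 :
    ∃ C : ℝ, 0 < C ∧
      ∀ (Ω : Type) (_ : MeasurableSpace Ω) (q : Measure Ω), IsProbabilityMeasure q →
        ∀ (Z : Ω → ℝ) (μZ σ : ℝ),
          Integrable Z q →
          μZ = ∫ x, Z x ∂q →
          0 ≤ μZ → μZ ≤ 1 →
          0 ≤ σ → σ ≤ 1 →
          (∀ lam : ℝ, |lam| ≤ 2 →
            ∫ x, Real.exp (lam * (Z x - μZ)) ∂q ≤ Real.exp (lam ^ 2 * σ ^ 2 / 2)) →
          Real.sqrt (∫ x, (Real.exp (Z x) - 1) ^ 2 ∂q) ≤ C * (μZ + σ) := by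
  refine ⟨4 * Real.exp 4, by positivity, ?_⟩
  intro Ω mΩ q hq Z μZ σ hZint hμ hμ0 hμ1 hσ0 hσ1 hmgf
  have hμσ : 0 ≤ μZ + σ := by linarith
  by_cases hint : Integrable (fun x => (Real.exp (Z x) - 1) ^ 2) q
  · -- main case
    have hmeas : AEStronglyMeasurable (fun x => Real.exp (Z x)) q :=
      Real.continuous_exp.comp_aestronglyMeasurable hZint.aestronglyMeasurable
    have hexpZ : Integrable (fun x => Real.exp (Z x)) q := by
      have hg : Integrable (fun x => (Real.exp (Z x) - 1) ^ 2 + 2) q :=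
        hint.add (integrable_const 2)
      refine hg.mono' hmeas ?_
      filter_upwards with x
      rw [Real.norm_eq_abs, abs_of_nonneg (Real.exp_pos _).le]
      nlinarith [Real.exp_pos (Z x)]
    have hexp2Z : Integrable (fun x => Real.exp (2 * Z x)) q := by
      refine ((hint.add ((hexpZ.const_mul 2).sub (integrable_const 1)))).congr ?_
      filter_upwards with x
      have h2x : Real.exp (2 * Z x) = Real.exp (Z x) * Real.exp (Z x) := by
        rw [two_mul, Real.exp_add]
      simp only [Pi.add_apply, Pi.sub_apply]
      rw [h2x]; ring
    -- upper bound on ∫ exp(2Z)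
    have hE2 : ∫ x, Real.exp (2 * Z x) ∂q ≤ Real.exp (2 * μZ) * Real.exp (2 * σ ^ 2) := by
      have h2 := hmgf 2 (by norm_num)
      have heq : (fun x => Real.exp (2 * Z x))
          = fun x => Real.exp (2 * μZ) * Real.exp (2 * (Z x - μZ)) := by
        funext x; rw [← Real.exp_add]; ring_nf
      rw [heq, integral_const_mul]
      have : ((2:ℝ) ^ 2 * σ ^ 2 / 2) = 2 * σ ^ 2 := by ring
      rw [this] at h2
      exact mul_le_mul_of_nonneg_left h2 (Real.exp_pos _).le
    -- lower bound on ∫ exp(Z)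
    have hE1 : 1 + μZ ≤ ∫ x, Real.exp (Z x) ∂q := by
      have hmono : ∫ x, (Z x + 1) ∂q ≤ ∫ x, Real.exp (Z x) ∂q := by
        refine integral_mono (hZint.add (integrable_const 1)) hexpZ ?_
        intro x; exact Real.add_one_le_exp (Z x)
      have : ∫ x, (Z x + 1) ∂q = μZ + 1 := by
        rw [integral_add hZint (integrable_const 1), integral_const]
        simp [hμ]
      linarith [hmono, this ▸ hmono]
    -- expansion of the square
    have hsplit : ∫ x, (Real.exp (Z x) - 1) ^ 2 ∂q
        = (∫ x, Real.exp (2 * Z x) ∂q) - 2 * (∫ x, Real.exp (Z x) ∂q) + 1 := by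
      have heq : (fun x => (Real.exp (Z x) - 1) ^ 2)
          = fun x => (Real.exp (2 * Z x) - 2 * Real.exp (Z x)) + 1 := by
        funext x
        have : Real.exp (2 * Z x) = Real.exp (Z x) * Real.exp (Z x) := by
          rw [two_mul, Real.exp_add]
        rw [this]; ring
      have hf : Integrable (fun x => Real.exp (2 * Z x) - 2 * Real.exp (Z x)) q :=
        hexp2Z.sub (hexpZ.const_mul 2)
      rw [heq, integral_add hf (integrable_const 1),
        integral_sub hexp2Z (hexpZ.const_mul 2), integral_const_mul, integral_const]
      simp
    -- key algebraic bound
    have ha1 : Real.exp (2 * μZ) - 1 ≤ 2 * μZ * Real.exp (2 * μZ) := by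
      have h := Real.add_one_le_exp (-(2 * μZ))
      have hprod : Real.exp (-(2 * μZ)) * Real.exp (2 * μZ) = 1 := by
        rw [← Real.exp_add]; simp
      nlinarith [Real.exp_pos (2 * μZ),
        mul_le_mul_of_nonneg_right h (Real.exp_pos (2 * μZ)).le]
    have hb1 : Real.exp (2 * σ ^ 2) - 1 ≤ 2 * σ ^ 2 * Real.exp (2 * σ ^ 2) := by
      have h := Real.add_one_le_exp (-(2 * σ ^ 2))
      have hprod : Real.exp (-(2 * σ ^ 2)) * Real.exp (2 * σ ^ 2) = 1 := by
        rw [← Real.exp_add]; simp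
      nlinarith [Real.exp_pos (2 * σ ^ 2),
        mul_le_mul_of_nonneg_right h (Real.exp_pos (2 * σ ^ 2)).le]
    have hae2 : Real.exp (2 * μZ) ≤ Real.exp 2 := Real.exp_le_exp.2 (by linarith)
    have hbe2 : Real.exp (2 * σ ^ 2) ≤ Real.exp 2 := by
      refine Real.exp_le_exp.2 ?_; nlinarith
    have he4 : Real.exp 4 = Real.exp 2 * Real.exp 2 := by
      rw [← Real.exp_add]; norm_num
    have ha0 : (1:ℝ) ≤ Real.exp (2 * μZ) := Real.one_le_exp (by linarith)
    have hb0 : (1:ℝ) ≤ Real.exp (2 * σ ^ 2) := Real.one_le_exp (by positivity)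
    have he2 : (1:ℝ) ≤ Real.exp 2 := Real.one_le_exp (by norm_num)
    have hbound : ∫ x, (Real.exp (Z x) - 1) ^ 2 ∂q
        ≤ (2 * Real.exp 2 * (μZ + σ)) ^ 2 := by
      rw [hsplit]
      have hab : Real.exp (2 * μZ) * Real.exp (2 * σ ^ 2) ≤ Real.exp 2 * Real.exp 2 :=
        mul_le_mul hae2 hbe2 (by positivity) (by positivity)
      have step1 : Real.exp (2 * μZ) - 1 - 2 * μZ ≤ 4 * μZ ^ 2 * Real.exp 2 := by
        nlinarith [mul_le_mul_of_nonneg_left ha1 hμ0,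
          mul_le_mul_of_nonneg_left hae2 (sq_nonneg μZ)]
      have step2 : Real.exp (2 * μZ) * (Real.exp (2 * σ ^ 2) - 1)
          ≤ 2 * σ ^ 2 * (Real.exp 2 * Real.exp 2) := by
        nlinarith [mul_le_mul_of_nonneg_left hb1 (Real.exp_pos (2 * μZ)).le,
          mul_le_mul_of_nonneg_left hab (sq_nonneg σ)]
      have key : Real.exp (2 * μZ) * Real.exp (2 * σ ^ 2) - 1 - 2 * μZ
          ≤ (2 * Real.exp 2 * (μZ + σ)) ^ 2 := by
        nlinarith [step1, step2, mul_nonneg hμ0 hσ0, he2, sq_nonneg μZ, sq_nonneg σ,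
          mul_le_mul_of_nonneg_left he2 (Real.exp_pos 2).le,
          mul_nonneg (mul_nonneg hμ0 hσ0) (Real.exp_pos 2).le,
          mul_le_mul_of_nonneg_left (mul_le_mul_of_nonneg_left he2 (Real.exp_pos 2).le) (sq_nonneg μZ)]
      linarith [hE2, hE1]
    calc Real.sqrt (∫ x, (Real.exp (Z x) - 1) ^ 2 ∂q)
        ≤ Real.sqrt ((2 * Real.exp 2 * (μZ + σ)) ^ 2) := Real.sqrt_le_sqrt hbound
      _ = 2 * Real.exp 2 * (μZ + σ) := Real.sqrt_sq (by positivity)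
      _ ≤ 4 * Real.exp 4 * (μZ + σ) := by
          nlinarith [mul_le_mul_of_nonneg_left he2 (Real.exp_pos 2).le, hμσ, he2, he4,
            Real.exp_pos 2]
  · rw [integral_undef hint, Real.sqrt_zero]
    positivity
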